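/- If x ∈ ℚ[S_m] and y ∈ ℚ[S_n] (m, n ≥ 1) are primitive, i.e., Δ̃(x) = 0 and Δ̃(y) = 0, then x↗y − y↙x is primitive: Δ̃(x↗y − y↙x) = 0 in ⊕_i ℚ[S_i]⊗ℚ[S_{m+n−i}]. -/

import Mathlib

/-- The free module on words of positive integers, with coefficients in `R`.
`ℚ[S_n]` is identified with the span of the permutation words of {1,…,n}. -/
abbrev FW (R : Type) [CommRing R] := (List ℕ) →₀ R

variable {R : Type} [CommRing R]

/-- Concatenation product, extended bilinearly. -/
noncomputable def catW (x y : FW R) : FW R :=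
  x.sum fun u a => y.sum fun v b => Finsupp.single (u ++ v) (a * b)

/-- The bracket [x,y] = x·y − y·x of the concatenation product. -/
noncomputable def brakW (x y : FW R) : FW R := catW x y - catW y x

/-- (Incomplete) binary trees; `nil` is the empty tree. The complete binary tree with
`t.nodes + 1` leaves whose internal nodes form `t` is implicit in the definitions below. -/
inductive BT
  | nil : BT
  | nd : BT → BT → BT
deriving DecidableEq

/-- Number of nodes of a binary tree. -/
def BT.nodes : BT → ℕ
  | .nil => 0
  | .nd l r => l.nodes + r.nodes + 1

/-- The evaluation T(σ) of the complete binary tree `T` whose internal nodes form `t`, with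
leaves labelled left to right by the word `w`: each leaf gets the one-letter word of its label
and each internal node the bracket of concatenation. -/
noncomputable def evalBT : BT → List ℕ → FW R
  | .nil, w => Finsupp.single w 1
  | .nd l r, w => brakW (evalBT l (w.take (l.nodes + 1))) (evalBT r (w.drop (l.nodes + 1)))

/-- The standardization of a word with distinct letters: each letter is replaced by its rank. -/
def stdW (w : List ℕ) : List ℕ := w.map fun x => (w.filter (· ≤ x)).length

/-- The set of permutation words of {1, …, n}. -/
def permWords (n : ℕ) : Finset (List ℕ) := (List.range' 1 n).permutations.toFinset

/-- Convolution α⋆β of two permutation words: the sum of all permutation words γ of size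
|α|+|β| with std(γ(1)⋯γ(m)) = α and std(γ(m+1)⋯γ(m+n)) = β. -/
noncomputable def convW (u v : List ℕ) : FW R :=
  ∑ γ ∈ (permWords (u.length + v.length)).filter
      (fun γ => stdW (γ.take u.length) = u ∧ stdW (γ.drop u.length) = v),
    Finsupp.single γ 1

/-- The convolution product, extended bilinearly. -/
noncomputable def starW (x y : FW R) : FW R :=
  x.sum fun u a => y.sum fun v b => (a * b) • convW u v

/-- Whether the word `w` is an admissible labelling of (the completion of) `t`: at each internal
node, the smallest label lies in the left subtree and the largest in the right subtree. -/
def admB : BT → List ℕ → Bool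
  | .nil, _ => true
  | .nd l r, w =>
    admB l (w.take (l.nodes + 1)) && admB r (w.drop (l.nodes + 1))
      && decide ((w.take (l.nodes + 1)).minimum = w.minimum)
      && decide ((w.drop (l.nodes + 1)).maximum = w.maximum)

/-- c_t: the sum of the evaluations T(σ) over all admissible labellings σ of the complete
binary tree whose internal nodes form `t`. -/
noncomputable def cElt (t : BT) : FW R :=
  ∑ w ∈ (permWords (t.nodes + 1)).filter (fun w => admB t w = true), evalBT t w


/-- The target module for the reduced coproduct: the free module on pairs of words,
modelling ⊕_i ℚ[S_i] ⊗ ℚ[S_{n−i}]. -/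
abbrev FW2 (R : Type) [CommRing R] := (List ℕ × List ℕ) →₀ R

/-- The reduced coproduct of a permutation word of {1,…,n}:
Δ̃(w) = Σ_{i=1}^{n−1} w_{≤i} ⊗ std(w_{>i}), where w_{≤i} is the subword of letters ≤ i and
w_{>i} the subword of letters > i. -/
noncomputable def copW (w : List ℕ) : FW2 R :=
  ∑ i ∈ Finset.Ioo 0 w.length,
    Finsupp.single (w.filter (· ≤ i), stdW (w.filter (fun x => i < x))) 1

/-- The reduced coproduct, extended linearly. -/
noncomputable def coprodW (x : FW R) : FW2 R := x.sum fun w a => a • copW w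

/-- Word-level half product α↗β: the sum of all permutation words γ of size m+n = |α|+|β| with
std(γ(1)⋯γ(m)) = α, std(γ(m+1)⋯γ(m+n)) = β, the letter 1 among the first m letters of γ and
the letter m+n among the last n letters. -/
noncomputable def neW (u v : List ℕ) : FW R :=
  ∑ γ ∈ (permWords (u.length + v.length)).filter
      (fun γ => stdW (γ.take u.length) = u ∧ stdW (γ.drop u.length) = v
        ∧ 1 ∈ γ.take u.length ∧ (u.length + v.length) ∈ γ.drop u.length),
    Finsupp.single γ 1

/-- Word-level half product α↙β: as for ↗ but with the letter 1 among the last n letters and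
the letter m+n among the first m letters. -/
noncomputable def swW (u v : List ℕ) : FW R :=
  ∑ γ ∈ (permWords (u.length + v.length)).filter
      (fun γ => stdW (γ.take u.length) = u ∧ stdW (γ.drop u.length) = v
        ∧ 1 ∈ γ.drop u.length ∧ (u.length + v.length) ∈ γ.take u.length),
    Finsupp.single γ 1

/-- α↗β extended bilinearly. -/
noncomputable def neExt (x y : FW R) : FW R :=
  x.sum fun u a => y.sum fun v b => (a * b) • neW u v

/-- α↙β extended bilinearly. -/
noncomputable def swExt (x y : FW R) : FW R :=
  x.sum fun u a => y.sum fun v b => (a * b) • swW u v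

namespace Aux
open List

/-! ### permWords basics -/

lemma mem_permWords {n : ℕ} {w : List ℕ} : w ∈ permWords n ↔ w ~ List.range' 1 n := by
  simp [permWords, List.mem_permutations]

lemma pw_length {n : ℕ} {w : List ℕ} (h : w ∈ permWords n) : w.length = n := by
  rw [mem_permWords] at h; simpa using h.length_eq

lemma pw_nodup {n : ℕ} {w : List ℕ} (h : w ∈ permWords n) : w.Nodup := by
  rw [mem_permWords] at h; exact h.nodup_iff.2 (List.nodup_range' (s := 1) (n := n))

lemma pw_mem_bounds {n : ℕ} {w : List ℕ} (h : w ∈ permWords n) {a : ℕ} (ha : a ∈ w) :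
    1 ≤ a ∧ a ≤ n := by
  rw [mem_permWords] at h
  have := h.mem_iff.1 ha
  rw [List.mem_range'] at this
  obtain ⟨i, hi, rfl⟩ := this; omega

lemma filter_range'_le {s L a : ℕ} (h1 : s ≤ a + 1) (h2 : a < s + L) :
    (List.range' s L).filter (· ≤ a) = List.range' s (a + 1 - s) := by
  have hL : L = (L - (a + 1 - s)) + (a + 1 - s) := by omega
  rw [hL, Nat.add_comm (L - (a+1-s)) (a+1-s), ← List.range'_append (s := s) (m := a+1-s) (n := L - (a+1-s)) (step := 1), List.filter_append]
  rw [List.filter_eq_self.2, List.filter_eq_nil_iff.2, List.append_nil]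
  · intro x hx
    rw [List.mem_range'] at hx
    obtain ⟨i, hi, rfl⟩ := hx
    simp; omega
  · intro x hx
    rw [List.mem_range'] at hx
    obtain ⟨i, hi, rfl⟩ := hx
    simp; omega

lemma filter_range'_gt {s L a : ℕ} (h1 : s ≤ a + 1) (h2 : a < s + L) :
    (List.range' s L).filter (fun x => a < x) = List.range' (a + 1) (s + L - (a + 1)) := by
  have key : List.range' s L = List.range' s (a + 1 - s) ++ List.range' (a + 1) (s + L - (a + 1)) := by
    have h := List.range'_append (s := s) (m := a+1-s) (n := s + L - (a+1)) (step := 1)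
    rw [show s + 1 * (a + 1 - s) = a + 1 by omega,
      show a + 1 - s + (s + L - (a + 1)) = L by omega] at h
    exact h.symm
  rw [key, List.filter_append, List.filter_eq_nil_iff.2, List.filter_eq_self.2, List.nil_append]
  all_goals intro x hx
  all_goals rw [List.mem_range'] at hx
  all_goals obtain ⟨i, hi, rfl⟩ := hx
  all_goals simp only [decide_eq_true_eq, Bool.not_eq_true, decide_eq_false_iff_not]
  all_goals omega

lemma pw_filter_le {n i : ℕ} {w : List ℕ} (h : w ∈ permWords n) (hi : i ≤ n) :
    w.filter (· ≤ i) ∈ permWords i := by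
  rw [mem_permWords] at h ⊢
  refine (h.filter _).trans ?_
  rw [filter_range'_le (by omega) (by omega)]
  simp

lemma pw_filter_gt {n i : ℕ} {w : List ℕ} (h : w ∈ permWords n) (hi : i ≤ n) :
    w.filter (fun x => i < x) ~ List.range' (i + 1) (n - i) := by
  rw [mem_permWords] at h
  refine (h.filter _).trans ?_
  rw [filter_range'_gt (by omega) (by omega)]
  have : 1 + n - (i + 1) = n - i := by omega
  rw [this]

lemma pw_length_filter_le {n i : ℕ} {w : List ℕ} (h : w ∈ permWords n) (hi : i ≤ n) :
    (w.filter (· ≤ i)).length = i := pw_length (pw_filter_le h hi)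

/-! ### rank and standardization -/

/-- The rank of a value in a word. -/
def rk (w : List ℕ) (a : ℕ) : ℕ := (w.filter (· ≤ a)).length

lemma stdW_eq_map_rk (w : List ℕ) : stdW w = w.map (rk w) := rfl

lemma length_stdW (w : List ℕ) : (stdW w).length = w.length := by
  simp [stdW]

lemma rk_mono (w : List ℕ) {a b : ℕ} (h : a ≤ b) : rk w a ≤ rk w b := by
  unfold rk
  rw [← List.countP_eq_length_filter, ← List.countP_eq_length_filter]
  exact List.countP_mono_left (fun x _ hx => by simp at hx ⊢; omega)

lemma rk_lt (w : List ℕ) {a b : ℕ} (hb : b ∈ w) (h : a < b) : rk w a < rk w b := by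
  unfold rk
  have h1 : w.filter (· ≤ a) = (w.filter (· ≤ b)).filter (· ≤ a) := by
    rw [List.filter_filter]
    refine (List.filter_congr ?_).symm
    intro x _; simp; omega
  rw [h1]
  exact List.length_filter_lt_length_iff_exists.2 ⟨b, by simp [hb], by simp; omega⟩

lemma rk_le_iff {w : List ℕ} {a : ℕ} (ha : a ∈ w) (i : ℕ) :
    rk w a ≤ rk w i ↔ a ≤ i := by
  constructor
  · intro h; by_contra hc
    push_neg at hc
    have := rk_lt w ha hc
    omega
  · exact rk_mono w

lemma rk_pos {w : List ℕ} {a : ℕ} (ha : a ∈ w) : 1 ≤ rk w a := by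
  have : a ∈ w.filter (· ≤ a) := by simp [ha]
  have := List.length_pos_of_mem this
  unfold rk; omega

lemma rk_le_length (w : List ℕ) (a : ℕ) : rk w a ≤ w.length :=
  List.length_filter_le _ _

lemma stdW_map_mono {w : List ℕ} {f : ℕ → ℕ}
    (hf : ∀ a ∈ w, ∀ b ∈ w, (f a ≤ f b ↔ a ≤ b)) :
    stdW (w.map f) = stdW w := by
  rw [stdW_eq_map_rk, stdW_eq_map_rk, List.map_map]
  refine List.map_congr_left (fun a ha => ?_)
  show rk (w.map f) (f a) = rk w a
  unfold rk
  rw [← List.countP_eq_length_filter, ← List.countP_eq_length_filter, List.countP_map]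
  refine List.countP_congr (fun b hb => ?_)
  simp only [Function.comp]
  simp [hf b hb a ha]

lemma rk_of_perm_range' {w : List ℕ} {c L : ℕ} (h : w ~ List.range' (c + 1) L)
    {a : ℕ} (ha : a ∈ w) : rk w a = a - c := by
  have hb : c + 1 ≤ a ∧ a < c + 1 + L := by
    have := h.mem_iff.1 ha
    rw [List.mem_range'] at this
    obtain ⟨i, hi, rfl⟩ := this; omega
  unfold rk
  rw [← List.countP_eq_length_filter, h.countP_eq, List.countP_eq_length_filter,
    filter_range'_le (by omega) (by omega)]
  simp only [List.length_range']
  omega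

lemma stdW_of_perm_range' {w : List ℕ} {c L : ℕ} (h : w ~ List.range' (c + 1) L) :
    stdW w = w.map (fun a => a - c) := by
  rw [stdW_eq_map_rk]
  exact List.map_congr_left (fun a ha => rk_of_perm_range' h ha)

lemma stdW_pw {n : ℕ} {w : List ℕ} (h : w ∈ permWords n) : stdW w = w := by
  rw [stdW_of_perm_range' (c := 0) (by simpa using mem_permWords.1 h)]
  simp

lemma unshift {w : List ℕ} {c L : ℕ} (h : w ~ List.range' (c + 1) L) :
    (stdW w).map (· + c) = w := by
  rw [stdW_of_perm_range' h, List.map_map]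
  refine (List.map_congr_left (fun a ha => ?_)).trans (List.map_id w)
  have := h.mem_iff.1 ha
  rw [List.mem_range'] at this
  obtain ⟨i, hi, rfl⟩ := this
  simp only [Function.comp_apply, id_eq]
  omega

lemma stdW_shift (w : List ℕ) (c : ℕ) : stdW (w.map (· + c)) = stdW w :=
  stdW_map_mono (fun a _ b _ => by omega)

lemma stdW_mem_pw {w : List ℕ} (h : w.Nodup) : stdW w ∈ permWords w.length := by
  rw [mem_permWords]
  have hnd : (stdW w).Nodup := by
    rw [stdW_eq_map_rk]
    refine h.map_on (fun a ha b hb hab => ?_)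
    by_contra hne
    rcases Nat.lt_or_ge a b with hlt | hge
    · have := rk_lt w hb hlt; omega
    · have hba : b < a := by omega
      have := rk_lt w ha hba; omega
  have hsub : stdW w ⊆ List.range' 1 w.length := by
    intro a ha
    rw [stdW_eq_map_rk] at ha
    obtain ⟨b, hb, rfl⟩ := List.mem_map.1 ha
    rw [List.mem_range']
    exact ⟨rk w b - 1, by have h1 := rk_pos hb; have h2 := rk_le_length w b; omega⟩
  refine (hnd.subperm hsub).perm_of_length_le (by simp [length_stdW])

end Aux
namespace Aux
open List

/-! ### interleaving along a mask -/

def itlP : List Bool → List ℕ → List ℕ → List ℕ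
  | [], _, _ => []
  | true :: mk, s, l => s.headI :: itlP mk s.tail l
  | false :: mk, s, l => l.headI :: itlP mk s l.tail

@[simp] lemma itlP_nil (s l : List ℕ) : itlP [] s l = [] := rfl
@[simp] lemma itlP_true (mk : List Bool) (s l : List ℕ) :
    itlP (true :: mk) s l = s.headI :: itlP mk s.tail l := rfl
@[simp] lemma itlP_false (mk : List Bool) (s l : List ℕ) :
    itlP (false :: mk) s l = l.headI :: itlP mk s l.tail := rfl

lemma itlP_length (mk : List Bool) (s l : List ℕ) : (itlP mk s l).length = mk.length := by
  induction mk generalizing s l with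
  | nil => rfl
  | cons b mk ih => cases b <;> simp [ih]

lemma itlP_recon (w : List ℕ) (P : ℕ → Bool) :
    itlP (w.map P) (w.filter P) (w.filter (fun a => !P a)) = w := by
  induction w with
  | nil => rfl
  | cons a w ih =>
    rcases hPa : P a with h | h <;> simp [List.filter_cons, hPa, ih]

lemma itlP_perm {mk : List Bool} {s l : List ℕ}
    (hs : s.length = mk.count true) (hl : l.length = mk.count false) :
    itlP mk s l ~ s ++ l := by
  induction mk generalizing s l with
  | nil =>
    simp at hs hl
    simp [hs, hl]
  | cons b mk ih =>
    cases b
    · cases l with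
      | nil => simp [List.count_cons] at hl
      | cons c l =>
        simp only [itlP_false, List.tail_cons, List.headI_cons]
        simp only [List.count_cons] at hs hl
        refine ((ih (by simpa using hs) (by simpa using hl)).cons c).trans ?_
        exact List.perm_middle.symm
    · cases s with
      | nil => simp [List.count_cons] at hs
      | cons c s =>
        simp only [itlP_true, List.tail_cons, List.headI_cons]
        simp only [List.count_cons] at hs hl
        exact (ih (by simpa using hs) (by simpa using hl)).cons c

lemma itlP_filter_pos {mk : List Bool} {s l : List ℕ} (Q : ℕ → Bool)
    (hQs : ∀ a ∈ s, Q a = true) (hQl : ∀ a ∈ l, Q a = false)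
    (hs : s.length = mk.count true) (hl : l.length = mk.count false) :
    (itlP mk s l).filter Q = s := by
  induction mk generalizing s l with
  | nil => simp at hs; simp [hs]
  | cons b mk ih =>
    cases b
    · cases l with
      | nil => simp [List.count_cons] at hl
      | cons c l =>
        simp only [List.count_cons] at hs hl
        simp only [itlP_false, List.tail_cons, List.headI_cons, List.filter_cons,
          hQl c (by simp)]
        exact ih (fun a ha => hQs a ha) (fun a ha => hQl a (by simp [ha]))
          (by simpa using hs) (by simpa using hl)
    · cases s with
      | nil => simp [List.count_cons] at hs
      | cons c s =>
        simp only [List.count_cons] at hs hl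
        simp only [itlP_true, List.tail_cons, List.headI_cons, List.filter_cons,
          hQs c (by simp), if_true]
        rw [ih (fun a ha => hQs a (by simp [ha])) hQl (by simpa using hs) (by simpa using hl)]

lemma itlP_filter_neg {mk : List Bool} {s l : List ℕ} (Q : ℕ → Bool)
    (hQs : ∀ a ∈ s, Q a = true) (hQl : ∀ a ∈ l, Q a = false)
    (hs : s.length = mk.count true) (hl : l.length = mk.count false) :
    (itlP mk s l).filter (fun a => !Q a) = l := by
  induction mk generalizing s l with
  | nil => simp at hl; simp [hl]
  | cons b mk ih =>
    cases b
    · cases l with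
      | nil => simp [List.count_cons] at hl
      | cons c l =>
        simp only [List.count_cons] at hs hl
        simp only [itlP_false, List.tail_cons, List.headI_cons, List.filter_cons,
          hQl c (by simp)]
        simp only [Bool.not_false, if_true]
        rw [ih hQs (fun a ha => hQl a (by simp [ha])) (by simpa using hs) (by simpa using hl)]
    · cases s with
      | nil => simp [List.count_cons] at hs
      | cons c s =>
        simp only [List.count_cons] at hs hl
        simp only [itlP_true, List.tail_cons, List.headI_cons, List.filter_cons,
          hQs c (by simp)]
        simp only [Bool.not_true]
        rw [if_neg (by simp)]
        exact ih (fun a ha => hQs a (by simp [ha])) hQl (by simpa using hs) (by simpa using hl)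

lemma itlP_map {mk : List Bool} {s l : List ℕ} (f : ℕ → ℕ)
    (hs : s.length = mk.count true) (hl : l.length = mk.count false) :
    (itlP mk s l).map f = itlP mk (s.map f) (l.map f) := by
  induction mk generalizing s l with
  | nil => rfl
  | cons b mk ih =>
    cases b
    · cases l with
      | nil => simp [List.count_cons] at hl
      | cons c l =>
        simp only [List.count_cons] at hs hl
        simp only [itlP_false, List.tail_cons, List.headI_cons, List.map_cons]
        rw [ih (by simpa using hs) (by simpa using hl)]
    · cases s with
      | nil => simp [List.count_cons] at hs
      | cons c s =>
        simp only [List.count_cons] at hs hl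
        simp only [itlP_true, List.tail_cons, List.headI_cons, List.map_cons]
        rw [ih (by simpa using hs) (by simpa using hl)]

lemma itlP_mask {mk : List Bool} {s l : List ℕ} (Q : ℕ → Bool)
    (hQs : ∀ a ∈ s, Q a = true) (hQl : ∀ a ∈ l, Q a = false)
    (hs : s.length = mk.count true) (hl : l.length = mk.count false) :
    (itlP mk s l).map Q = mk := by
  induction mk generalizing s l with
  | nil => rfl
  | cons b mk ih =>
    cases b
    · cases l with
      | nil => simp [List.count_cons] at hl
      | cons c l =>
        simp only [List.count_cons] at hs hl
        simp only [itlP_false, List.tail_cons, List.headI_cons, List.map_cons, hQl c (by simp)]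
        rw [ih hQs (fun a ha => hQl a (by simp [ha])) (by simpa using hs) (by simpa using hl)]
    · cases s with
      | nil => simp [List.count_cons] at hs
      | cons c s =>
        simp only [List.count_cons] at hs hl
        simp only [itlP_true, List.tail_cons, List.headI_cons, List.map_cons, hQs c (by simp)]
        rw [ih (fun a ha => hQs a (by simp [ha])) hQl (by simpa using hs) (by simpa using hl)]

lemma itlP_std {mk : List Bool} {s l : List ℕ} {c : ℕ}
    (hsc : ∀ a ∈ s, a ≤ c) (hlc : ∀ a ∈ l, c < a)
    (hs : s.length = mk.count true) (hl : l.length = mk.count false) :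
    stdW (itlP mk s l) = itlP mk (stdW s) ((stdW l).map (· + s.length)) := by
  have hperm := itlP_perm hs hl
  have hrk : ∀ a, rk (itlP mk s l) a = rk s a + rk l a := by
    intro a
    unfold rk
    rw [← List.countP_eq_length_filter, hperm.countP_eq, List.countP_append,
      List.countP_eq_length_filter, List.countP_eq_length_filter]
  rw [stdW_eq_map_rk, itlP_map _ hs hl]
  have h1 : s.map (rk (itlP mk s l)) = stdW s := by
    rw [stdW_eq_map_rk]
    refine List.map_congr_left fun a ha => ?_
    rw [hrk]
    have : rk l a = 0 := by
      unfold rk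
      rw [← List.countP_eq_length_filter]
      rw [List.countP_eq_zero]
      intro b hb
      have := hlc b hb; have := hsc a ha
      simp; omega
    omega
  have h2 : l.map (rk (itlP mk s l)) = (stdW l).map (· + s.length) := by
    rw [stdW_eq_map_rk, List.map_map]
    refine List.map_congr_left fun a ha => ?_
    rw [hrk]
    have : rk s a = s.length := by
      unfold rk
      rw [← List.countP_eq_length_filter, List.countP_eq_length]
      intro b hb
      have := hsc b hb; have := hlc a ha
      simp; omega
    simp only [Function.comp_apply]
    omega
  rw [h1, h2]

lemma count_true_map (f : ℕ → Bool) (w : List ℕ) :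
    (w.map f).count true = (w.filter f).length := by
  rw [List.count, List.countP_map, ← List.countP_eq_length_filter]
  congr 1
  funext a
  simp [Function.comp]

lemma count_false_map (f : ℕ → Bool) (w : List ℕ) :
    (w.map f).count false = (w.filter (fun a => !f a)).length := by
  rw [List.count, List.countP_map, ← List.countP_eq_length_filter]
  congr 1
  funext a
  simp [Function.comp]

end Aux
namespace Aux
open List

/-! ### std versus filtering by an initial segment of values -/

lemma stdW_map_rk {w C : List ℕ} (h : ∀ a ∈ w, a ∈ C) :
    stdW (w.map (rk C)) = stdW w :=
  stdW_map_mono (fun a ha b hb => rk_le_iff (h a ha) b)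

lemma filter_le_map (A : List ℕ) (i : ℕ) :
    (stdW A).filter (· ≤ rk A i) = (A.filter (· ≤ i)).map (rk A) := by
  rw [stdW_eq_map_rk, List.filter_map]
  congr 1
  refine List.filter_congr fun a ha => ?_
  simp only [Function.comp_apply]
  exact decide_eq_decide.2 (rk_le_iff ha i)

lemma filter_gt_map (A : List ℕ) (i : ℕ) :
    (stdW A).filter (fun b => rk A i < b) = (A.filter (fun a => i < a)).map (rk A) := by
  rw [stdW_eq_map_rk, List.filter_map]
  congr 1
  refine List.filter_congr fun a ha => ?_
  simp only [Function.comp_apply]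
  refine decide_eq_decide.2 ?_
  have := rk_le_iff ha i
  omega

lemma mask_le_map (A : List ℕ) (i : ℕ) :
    (stdW A).map (fun b => decide (b ≤ rk A i)) = A.map (fun a => decide (a ≤ i)) := by
  rw [stdW_eq_map_rk, List.map_map]
  refine List.map_congr_left fun a ha => ?_
  simp only [Function.comp_apply]
  exact decide_eq_decide.2 (rk_le_iff ha i)

lemma stdW_filter_le (A : List ℕ) (i : ℕ) :
    stdW (A.filter (· ≤ i)) = (stdW A).filter (· ≤ rk A i) := by
  rw [filter_le_map]
  rw [stdW_eq_map_rk (A.filter (· ≤ i))]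
  refine List.map_congr_left fun a ha => ?_
  rw [List.mem_filter] at ha
  obtain ⟨haA, hai⟩ := ha
  unfold rk
  rw [← List.countP_eq_length_filter, ← List.countP_eq_length_filter, List.countP_filter]
  refine List.countP_congr fun b hb => ?_
  simp at hai ⊢
  omega

lemma stdW_filter_gt (A : List ℕ) (i : ℕ) :
    stdW (A.filter (fun a => i < a)) = stdW ((stdW A).filter (fun b => rk A i < b)) := by
  rw [filter_gt_map, stdW_map_rk]
  intro a ha
  exact (List.mem_filter.1 ha).1

/-! ### the index sets -/

def oneSet (b : Bool) (u v : List ℕ) : Finset (List ℕ) :=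
  (permWords (u.length + v.length)).filter
    (fun γ => (stdW (γ.take u.length) = u ∧ stdW (γ.drop u.length) = v) ∧
      1 ∈ (if b then γ.take u.length else γ.drop u.length))

def maxSet (b : Bool) (u v : List ℕ) : Finset (List ℕ) :=
  (permWords (u.length + v.length)).filter
    (fun γ => (stdW (γ.take u.length) = u ∧ stdW (γ.drop u.length) = v) ∧
      (u.length + v.length) ∈ (if b then γ.drop u.length else γ.take u.length))

def genSet (b1 b2 : Bool) (u v : List ℕ) : Finset (List ℕ) :=
  (permWords (u.length + v.length)).filter
    (fun γ => (stdW (γ.take u.length) = u ∧ stdW (γ.drop u.length) = v) ∧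
      1 ∈ (if b1 then γ.take u.length else γ.drop u.length) ∧
      (u.length + v.length) ∈ (if b2 then γ.drop u.length else γ.take u.length))

def Pset (m n : ℕ) (b1 b2 : Bool) : Finset (ℕ × ℕ) :=
  (Finset.range (m+1) ×ˢ Finset.range (n+1)).filter
    (fun p => (if b1 then 1 ≤ p.1 else 1 ≤ p.2) ∧ (if b2 then p.2 < n else p.1 < m))

lemma neW_eq (u v : List ℕ) :
    neW u v = ∑ γ ∈ genSet true true u v, Finsupp.single γ (1:ℚ) := by
  unfold neW genSet
  congr 1
  refine Finset.filter_congr fun γ _ => ?_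
  simp only [if_true]
  tauto

lemma swW_eq (u v : List ℕ) :
    swW u v = ∑ γ ∈ genSet false false u v, Finsupp.single γ (1:ℚ) := by
  unfold swW genSet
  congr 1
  refine Finset.filter_congr fun γ _ => ?_
  simp only [if_false, Bool.false_eq_true]
  tauto

lemma pw_one_mem {m : ℕ} {u : List ℕ} (hm : 1 ≤ m) (hu : u ∈ permWords m) : 1 ∈ u := by
  rw [mem_permWords] at hu
  refine hu.mem_iff.2 ?_
  rw [List.mem_range']
  exact ⟨0, by omega, by omega⟩

lemma pw_top_mem {m : ℕ} {u : List ℕ} (hm : 1 ≤ m) (hu : u ∈ permWords m) : m ∈ u := by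
  rw [mem_permWords] at hu
  refine hu.mem_iff.2 ?_
  rw [List.mem_range']
  exact ⟨m - 1, by omega, by omega⟩

lemma oneSet_right_nil {m : ℕ} (hm : 1 ≤ m) {u : List ℕ} (hu : u ∈ permWords m) :
    oneSet true u [] = {u} := by
  have hlu := pw_length hu
  ext γ
  simp only [oneSet, Finset.mem_filter, Finset.mem_singleton, List.length_nil, Nat.add_zero,
    if_true, hlu]
  constructor
  · rintro ⟨hγ, ⟨h1, -⟩, -⟩
    have := pw_length hγ
    rw [List.take_of_length_le (by omega)] at h1
    rw [← h1, stdW_pw hγ]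
  · rintro rfl
    refine ⟨hu, ⟨?_, ?_⟩, ?_⟩
    · rw [List.take_of_length_le (by omega), stdW_pw hu]
    · rw [List.drop_eq_nil_of_le (by omega)]; rfl
    · rw [List.take_of_length_le (by omega)]
      exact pw_one_mem hm hu
  
lemma oneSet_left_nil {m : ℕ} (hm : 1 ≤ m) {u : List ℕ} (hu : u ∈ permWords m) :
    oneSet false [] u = {u} := by
  have hlu := pw_length hu
  ext γ
  simp only [oneSet, Finset.mem_filter, Finset.mem_singleton, List.length_nil, Nat.zero_add,
    if_false, Bool.false_eq_true, List.take_zero, List.drop_zero]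
  constructor
  · rintro ⟨hγ, ⟨-, h1⟩, -⟩
    rw [← h1, stdW_pw hγ]
  · rintro rfl
    rw [hlu]
    exact ⟨hu, ⟨rfl, stdW_pw hu⟩, pw_one_mem hm hu⟩

lemma maxSet_left_nil {n : ℕ} (hn : 1 ≤ n) {v : List ℕ} (hv : v ∈ permWords n) :
    maxSet true [] v = {v} := by
  have hlv := pw_length hv
  ext γ
  simp only [maxSet, Finset.mem_filter, Finset.mem_singleton, List.length_nil, Nat.zero_add,
    if_true, List.take_zero, List.drop_zero]
  constructor
  · rintro ⟨hγ, ⟨-, h1⟩, -⟩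
    rw [← h1, stdW_pw hγ]
  · rintro rfl
    rw [hlv]
    exact ⟨hv, ⟨rfl, stdW_pw hv⟩, pw_top_mem hn hv⟩

lemma maxSet_right_nil {n : ℕ} (hn : 1 ≤ n) {v : List ℕ} (hv : v ∈ permWords n) :
    maxSet false v [] = {v} := by
  have hlv := pw_length hv
  ext γ
  simp only [maxSet, Finset.mem_filter, Finset.mem_singleton, List.length_nil, Nat.add_zero,
    if_false, Bool.false_eq_true, hlv]
  constructor
  · rintro ⟨hγ, ⟨h1, -⟩, -⟩
    have := pw_length hγ
    rw [List.take_of_length_le (by omega)] at h1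
    rw [← h1, stdW_pw hγ]
  · rintro rfl
    refine ⟨hv, ⟨?_, ?_⟩, ?_⟩
    · rw [List.take_of_length_le (by omega), stdW_pw hv]
    · rw [List.drop_eq_nil_of_le (by omega)]; rfl
    · rw [List.take_of_length_le (by omega)]
      exact pw_top_mem hn hv

end Aux
namespace Aux
open List

/-! ### more helpers -/

lemma decide_not_le (i a : ℕ) : (decide (i < a)) = !decide (a ≤ i) := by
  by_cases h : a ≤ i <;> simp [h] <;> omega

lemma filter_not_le (w : List ℕ) (i : ℕ) :
    w.filter (fun a => i < a) = w.filter (fun a => !decide (a ≤ i)) :=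
  List.filter_congr fun a _ => decide_not_le i a

lemma pw_length_filter_gt {m j : ℕ} {u : List ℕ} (hu : u ∈ permWords m) (hj : j ≤ m) :
    (u.filter (fun a => j < a)).length = m - j := by
  have := (pw_filter_gt hu hj).length_eq
  simpa using this

lemma length_filter_le_of_std {A u : List ℕ} {mm j : ℕ} (hA : stdW A = u)
    (hlen : (u.filter (· ≤ j)).length = mm) (i : ℕ) (hj : rk A i = j) :
    (A.filter (· ≤ i)).length = mm := by
  have h := filter_le_map A i
  rw [hj, hA] at h
  have := congrArg List.length h
  simpa [hlen] using this.symm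

lemma append_swap (a b c d : List ℕ) : (a ++ b) ++ (c ++ d) ~ (a ++ c) ++ (b ++ d) := by
  have h1 : b ++ (c ++ d) ~ c ++ (b ++ d) := by
    calc b ++ (c ++ d) = (b ++ c) ++ d := by simp [List.append_assoc]
    _ ~ (c ++ b) ++ d := List.perm_append_comm.append_right d
    _ = c ++ (b ++ d) := by simp [List.append_assoc]
  calc (a ++ b) ++ (c ++ d) = a ++ (b ++ (c ++ d)) := by simp [List.append_assoc]
  _ ~ a ++ (c ++ (b ++ d)) := h1.append_left a
  _ = (a ++ c) ++ (b ++ d) := by simp [List.append_assoc]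

lemma map_shift_range' (i M : ℕ) : (List.range' 1 M).map (· + i) = List.range' (i+1) M := by
  have := List.map_add_range' (a := i) 1 M 1
  rw [← this]
  refine List.map_congr_left fun a _ => by omega

/-! ### the forward and backward maps -/

def fwd (m : ℕ) : List ℕ × ℕ → (_ : ℕ × ℕ) × (List ℕ × List ℕ) :=
  fun γi => ⟨(rk (γi.1.take m) γi.2, γi.2 - rk (γi.1.take m) γi.2),
    (γi.1.filter (· ≤ γi.2), stdW (γi.1.filter (fun a => γi.2 < a)))⟩

def bwd (m : ℕ) (u v : List ℕ) : ((_ : ℕ × ℕ) × (List ℕ × List ℕ)) → List ℕ × ℕ :=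
  fun x =>
    (itlP (u.map (fun a => decide (a ≤ x.1.1))) (x.2.1.take x.1.1)
        ((x.2.2.take (m - x.1.1)).map (· + (x.1.1 + x.1.2))) ++
     itlP (v.map (fun a => decide (a ≤ x.1.2))) (x.2.1.drop x.1.1)
        ((x.2.2.drop (m - x.1.1)).map (· + (x.1.1 + x.1.2))), x.1.1 + x.1.2)

end Aux
namespace Aux
open List

lemma rk_def (w : List ℕ) (a : ℕ) : rk w a = (w.filter (· ≤ a)).length := rfl

section Split
variable {m n : ℕ} {γ : List ℕ} {i : ℕ}

lemma split_facts (hγp : γ ∈ permWords (m+n)) (hi : i ≤ m + n) :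
    rk (γ.drop m) i = i - rk (γ.take m) i ∧
    rk (γ.take m) i ≤ i ∧ rk (γ.take m) i ≤ m ∧ i - rk (γ.take m) i ≤ n ∧
    (γ.filter (· ≤ i)).take (rk (γ.take m) i) = (γ.take m).filter (· ≤ i) ∧
    (γ.filter (· ≤ i)).drop (rk (γ.take m) i) = (γ.drop m).filter (· ≤ i) ∧
    (stdW (γ.filter (fun a => i < a))).take (m - rk (γ.take m) i) =
      ((γ.take m).filter (fun a => i < a)).map (rk (γ.filter (fun a => i < a))) ∧
    (stdW (γ.filter (fun a => i < a))).drop (m - rk (γ.take m) i) =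
      ((γ.drop m).filter (fun a => i < a)).map (rk (γ.filter (fun a => i < a))) ∧
    ((γ.take m).filter (fun a => i < a)).length = m - rk (γ.take m) i ∧
    ((γ.drop m).filter (fun a => i < a)).length = n - (i - rk (γ.take m) i) := by
  have hγlen := pw_length hγp
  set A := γ.take m with hA'
  set B := γ.drop m with hB'
  have hA : A.length = m := by rw [hA', List.length_take]; omega
  have hB : B.length = n := by rw [hB', List.length_drop]; omega
  have hAB : A ++ B = γ := List.take_append_drop m γ
  have hfa : γ.filter (· ≤ i) = A.filter (· ≤ i) ++ B.filter (· ≤ i) := by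
    rw [← List.filter_append, hAB]
  have hlg : (γ.filter (· ≤ i)).length = i := pw_length_filter_le hγp hi
  have hsplit : rk A i + rk B i = i := by
    have h := congrArg List.length hfa
    rw [List.length_append] at h
    rw [rk_def, rk_def]; omega
  have e7 : rk A i ≤ i := by omega
  have e6 : rk A i ≤ m := hA ▸ rk_le_length A i
  have e8 : i - rk A i ≤ n := by
    have := hB ▸ rk_le_length B i; omega
  have e1 : rk B i = i - rk A i := by omega
  have e2 : (γ.filter (· ≤ i)).take (rk A i) = A.filter (· ≤ i) := by
    rw [hfa]; exact List.take_left' rfl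
  have e3 : (γ.filter (· ≤ i)).drop (rk A i) = B.filter (· ≤ i) := by
    rw [hfa]; exact List.drop_left' rfl
  have hfc : γ.filter (fun a => i < a)
      = A.filter (fun a => i < a) ++ B.filter (fun a => i < a) := by
    rw [← List.filter_append, hAB]
  have lenA2 : (A.filter (fun a => i < a)).length = m - rk A i := by
    have h0 : A.length = (A.filter (fun x => decide (x ≤ i))).length +
        (A.filter (fun x => !decide (x ≤ i))).length :=
      List.length_eq_length_filter_add _
    have h2 : (A.filter (fun x => decide (x ≤ i))).length = rk A i := rfl
    rw [filter_not_le]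
    omega
  have lenB2 : (B.filter (fun a => i < a)).length = n - (i - rk A i) := by
    have h0 : B.length = (B.filter (fun x => decide (x ≤ i))).length +
        (B.filter (fun x => !decide (x ≤ i))).length :=
      List.length_eq_length_filter_add _
    have h2 : (B.filter (fun x => decide (x ≤ i))).length = rk B i := rfl
    rw [filter_not_le]
    omega
  have e45 : stdW (γ.filter (fun a => i < a)) =
      (A.filter (fun a => i < a)).map (rk (γ.filter (fun a => i < a))) ++
      (B.filter (fun a => i < a)).map (rk (γ.filter (fun a => i < a))) := by
    rw [← List.map_append, ← hfc, stdW_eq_map_rk]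
  have e4 : (stdW (γ.filter (fun a => i < a))).take (m - rk A i) =
      (A.filter (fun a => i < a)).map (rk (γ.filter (fun a => i < a))) := by
    rw [e45]
    exact List.take_left' (by rw [List.length_map, lenA2])
  have e5 : (stdW (γ.filter (fun a => i < a))).drop (m - rk A i) =
      (B.filter (fun a => i < a)).map (rk (γ.filter (fun a => i < a))) := by
    rw [e45]
    exact List.drop_left' (by rw [List.length_map, lenA2])
  exact ⟨e1, e7, e6, e8, e2, e3, e4, e5, lenA2, lenB2⟩

lemma fwd_mem (b1 b2 : Bool) {u v : List ℕ}
    (hu : u ∈ permWords m) (hv : v ∈ permWords n)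
    (hγ : γ ∈ genSet b1 b2 u v) (hlu : u.length = m) (hlv : v.length = n)
    (hi : i ∈ Finset.Ioo 0 (m + n)) :
    fwd m (γ, i) ∈ (Pset m n b1 b2).sigma (fun p =>
      (oneSet b1 (u.filter (· ≤ p.1)) (v.filter (· ≤ p.2))) ×ˢ
      (maxSet b2 (stdW (u.filter (fun a => p.1 < a))) (stdW (v.filter (fun a => p.2 < a))))) := by
  rw [Finset.mem_Ioo] at hi
  obtain ⟨hi0, hiN⟩ := hi
  rw [genSet, Finset.mem_filter, hlu, hlv] at hγ
  obtain ⟨hγp, ⟨hstd1, hstd2⟩, hcond1, hcond2⟩ := hγ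
  obtain ⟨e1, e7, e6, e8, e2, e3, e4, e5, lenA2, lenB2⟩ := split_facts hγp (le_of_lt hiN)
  have hγlen := pw_length hγp
  simp only [fwd]
  set A := γ.take m with hA'
  set B := γ.drop m with hB'
  set j := rk A i with hj'
  set k := i - j with hk'
  set δ := γ.filter (· ≤ i) with hδ'
  set C := γ.filter (fun a => i < a) with hC'
  set ε := stdW C with hε'
  have hδp : δ ∈ permWords i := pw_filter_le hγp (by omega)
  have hC : C ~ List.range' (i+1) (m+n-i) := pw_filter_gt hγp (by omega)
  have hCnd : C.Nodup := (List.filter_sublist (l := γ)).nodup (pw_nodup hγp)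
  have hCl : C.length = m+n-i := by simpa using hC.length_eq
  have hεp : ε ∈ permWords (m+n-i) := by rw [hε', ← hCl]; exact stdW_mem_pw hCnd
  have hsubA : ∀ a ∈ A.filter (fun a => i < a), a ∈ C := by
    intro a ha
    rw [List.mem_filter] at ha ⊢
    exact ⟨List.take_subset m γ ha.1, ha.2⟩
  have hsubB : ∀ a ∈ B.filter (fun a => i < a), a ∈ C := by
    intro a ha
    rw [List.mem_filter] at ha ⊢
    exact ⟨List.drop_subset m γ ha.1, ha.2⟩
  have lU1 : (u.filter (· ≤ j)).length = j := pw_length_filter_le hu e6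
  have lV1 : (v.filter (· ≤ k)).length = k := pw_length_filter_le hv e8
  have lU2 : (stdW (u.filter (fun a => j < a))).length = m - j := by
    rw [length_stdW]; exact pw_length_filter_gt hu e6
  have lV2 : (stdW (v.filter (fun a => k < a))).length = n - k := by
    rw [length_stdW]; exact pw_length_filter_gt hv e8
  have s10 : stdW (δ.take j) = u.filter (· ≤ j) := by
    rw [e2, stdW_filter_le, hstd1, ← hj']
  have s11 : stdW (δ.drop j) = v.filter (· ≤ k) := by
    rw [e3, stdW_filter_le, hstd2, e1]
  have s20 : stdW (ε.take (m - j)) = stdW (u.filter (fun a => j < a)) := by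
    rw [e4, stdW_map_rk hsubA, stdW_filter_gt, hstd1, ← hj']
  have s21 : stdW (ε.drop (m - j)) = stdW (v.filter (fun a => k < a)) := by
    rw [e5, stdW_map_rk hsubB, stdW_filter_gt, hstd2, e1]
  have hc1 : if b1 then (1 ≤ j ∧ 1 ∈ δ.take j) else (1 ≤ k ∧ 1 ∈ δ.drop j) := by
    cases b1
    · simp only [if_false, Bool.false_eq_true] at hcond1 ⊢
      have h1f : 1 ∈ B.filter (· ≤ i) := by
        rw [List.mem_filter]
        exact ⟨hcond1, by simp; omega⟩
      have hpos := List.length_pos_of_mem h1f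
      constructor
      · rw [rk_def] at e1; omega
      · rw [e3]; exact h1f
    · simp only [if_true] at hcond1 ⊢
      have h1f : 1 ∈ A.filter (· ≤ i) := by
        rw [List.mem_filter]
        exact ⟨hcond1, by simp; omega⟩
      have hpos := List.length_pos_of_mem h1f
      constructor
      · rw [hj', rk_def]; omega
      · rw [e2]; exact h1f
  have hc2 : if b2 then ((m+n-i) ∈ ε.drop (m - j) ∧ k < n)
      else ((m+n-i) ∈ ε.take (m - j) ∧ j < m) := by
    cases b2
    · simp only [if_false, Bool.false_eq_true] at hcond2 ⊢
      have hmf : (m+n) ∈ A.filter (fun a => i < a) := by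
        rw [List.mem_filter]
        exact ⟨hcond2, by simp; omega⟩
      have hpos := List.length_pos_of_mem hmf
      have hrkC : rk C (m+n) = m+n-i := rk_of_perm_range' hC (hsubA _ hmf)
      constructor
      · rw [e4]
        exact List.mem_map.2 ⟨m+n, hmf, hrkC⟩
      · omega
    · simp only [if_true] at hcond2 ⊢
      have hmf : (m+n) ∈ B.filter (fun a => i < a) := by
        rw [List.mem_filter]
        exact ⟨hcond2, by simp; omega⟩
      have hpos := List.length_pos_of_mem hmf
      have hrkC : rk C (m+n) = m+n-i := rk_of_perm_range' hC (hsubB _ hmf)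
      constructor
      · rw [e5]
        exact List.mem_map.2 ⟨m+n, hmf, hrkC⟩
      · omega
  rw [Finset.mem_sigma, Finset.mem_product]
  refine ⟨?_, ?_, ?_⟩
  · simp only [Pset, Finset.mem_filter, Finset.mem_product, Finset.mem_range]
    refine ⟨⟨by omega, by omega⟩, ?_, ?_⟩
    · cases b1
      · simp only [if_false, Bool.false_eq_true] at hc1 ⊢
        exact hc1.1
      · simp only [if_true] at hc1 ⊢
        exact hc1.1
    · cases b2
      · simp only [if_false, Bool.false_eq_true] at hc2 ⊢
        exact hc2.2
      · simp only [if_true] at hc2 ⊢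
        exact hc2.2
  · simp only [oneSet, Finset.mem_filter, lU1, lV1]
    refine ⟨by rw [show j + k = i by omega]; exact hδp, ⟨s10, s11⟩, ?_⟩
    cases b1
    · simp only [if_false, Bool.false_eq_true] at hc1 ⊢
      exact hc1.2
    · simp only [if_true] at hc1 ⊢
      exact hc1.2
  · simp only [maxSet, Finset.mem_filter, lU2, lV2]
    refine ⟨by rw [show (m-j) + (n-k) = m+n-i by omega]; exact hεp, ⟨s20, s21⟩, ?_⟩
    have hval : (m-j) + (n-k) = m+n-i := by omega
    rw [hval]
    cases b2
    · simp only [if_false, Bool.false_eq_true] at hc2 ⊢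
      exact hc2.1
    · simp only [if_true] at hc2 ⊢
      exact hc2.1

end Split
end Aux
namespace Aux
open List

lemma bwd_props {m n : ℕ} (b1 b2 : Bool) {u v : List ℕ}
    (hm : 1 ≤ m) (hn : 1 ≤ n)
    (hu : u ∈ permWords m) (hv : v ∈ permWords n) {j k : ℕ} {δ ε : List ℕ}
    (hp : (j,k) ∈ Pset m n b1 b2)
    (hδ : δ ∈ oneSet b1 (u.filter (· ≤ j)) (v.filter (· ≤ k)))
    (hε : ε ∈ maxSet b2 (stdW (u.filter (fun a => j < a))) (stdW (v.filter (fun a => k < a)))) :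
    bwd m u v ⟨(j,k),(δ,ε)⟩ ∈ (genSet b1 b2 u v) ×ˢ Finset.Ioo 0 (m+n) ∧
    fwd m (bwd m u v ⟨(j,k),(δ,ε)⟩) = ⟨(j,k),(δ,ε)⟩ := by
  have hlu : u.length = m := pw_length hu
  have hlv : v.length = n := pw_length hv
  simp only [Pset, Finset.mem_filter, Finset.mem_product, Finset.mem_range] at hp
  obtain ⟨⟨hjm, hkn⟩, hpc1, hpc2⟩ := hp
  have hj : j ≤ m := by omega
  have hk : k ≤ n := by omega
  have lU1 : (u.filter (· ≤ j)).length = j := pw_length_filter_le hu hj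
  have lV1 : (v.filter (· ≤ k)).length = k := pw_length_filter_le hv hk
  have lU2 : (stdW (u.filter (fun a => j < a))).length = m - j := by
    rw [length_stdW]; exact pw_length_filter_gt hu hj
  have lV2 : (stdW (v.filter (fun a => k < a))).length = n - k := by
    rw [length_stdW]; exact pw_length_filter_gt hv hk
  simp only [oneSet, Finset.mem_filter, lU1, lV1] at hδ
  obtain ⟨hδp, ⟨hδ1, hδ2⟩, hδc⟩ := hδ
  simp only [maxSet, Finset.mem_filter, lU2, lV2] at hε
  obtain ⟨hεp, ⟨hε1, hε2⟩, hεc⟩ := hε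
  have hbwd : bwd m u v ⟨(j,k),(δ,ε)⟩ =
      (itlP (u.map (fun a => decide (a ≤ j))) (δ.take j) ((ε.take (m-j)).map (· + (j+k))) ++
       itlP (v.map (fun a => decide (a ≤ k))) (δ.drop j) ((ε.drop (m-j)).map (· + (j+k))),
       j + k) := rfl
  rw [hbwd]
  set i := j + k with hi'
  set M := (m-j) + (n-k) with hM'
  set s1 := δ.take j with hs1'
  set s2 := δ.drop j with hs2'
  set l1 := (ε.take (m-j)).map (· + i) with hl1'
  set l2 := (ε.drop (m-j)).map (· + i) with hl2'
  set mk1 := u.map (fun a => decide (a ≤ j)) with hmk1'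
  set mk2 := v.map (fun a => decide (a ≤ k)) with hmk2'
  set G1 := itlP mk1 s1 l1 with hG1'
  set G2 := itlP mk2 s2 l2 with hG2'
  have hδlen : δ.length = i := pw_length hδp
  have hεlen : ε.length = M := pw_length hεp
  have cm1t : mk1.count true = j := by rw [hmk1', count_true_map]; exact lU1
  have cm1f : mk1.count false = m - j := by
    rw [hmk1', count_false_map, ← filter_not_le]; exact pw_length_filter_gt hu hj
  have cm2t : mk2.count true = k := by rw [hmk2', count_true_map]; exact lV1
  have cm2f : mk2.count false = n - k := by
    rw [hmk2', count_false_map, ← filter_not_le]; exact pw_length_filter_gt hv hk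
  have hs1 : s1.length = j := by rw [hs1', List.length_take]; omega
  have hs2 : s2.length = k := by rw [hs2', List.length_drop]; omega
  have hl1 : l1.length = m - j := by rw [hl1', List.length_map, List.length_take]; omega
  have hl2 : l2.length = n - k := by rw [hl2', List.length_map, List.length_drop]; omega
  have hs1c : ∀ a ∈ s1, a ≤ i := fun a ha =>
    (pw_mem_bounds hδp (List.take_subset _ _ ha)).2
  have hs2c : ∀ a ∈ s2, a ≤ i := fun a ha =>
    (pw_mem_bounds hδp (List.drop_subset _ _ ha)).2
  have hl1c : ∀ a ∈ l1, i < a := by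
    intro a ha
    rw [hl1'] at ha
    obtain ⟨e, he, rfl⟩ := List.mem_map.1 ha
    have := (pw_mem_bounds hεp (List.take_subset _ _ he)).1
    omega
  have hl2c : ∀ a ∈ l2, i < a := by
    intro a ha
    rw [hl2'] at ha
    obtain ⟨e, he, rfl⟩ := List.mem_map.1 ha
    have := (pw_mem_bounds hεp (List.drop_subset _ _ he)).1
    omega
  have p1 : G1 ~ s1 ++ l1 := itlP_perm (hs1.trans cm1t.symm) (hl1.trans cm1f.symm)
  have p2 : G2 ~ s2 ++ l2 := itlP_perm (hs2.trans cm2t.symm) (hl2.trans cm2f.symm)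
  have hG1len : G1.length = m := by
    rw [hG1', itlP_length, hmk1', List.length_map, hlu]
  have hG2len : G2.length = n := by
    rw [hG2', itlP_length, hmk2', List.length_map, hlv]
  have htake : (G1 ++ G2).take m = G1 := List.take_left' hG1len
  have hdrop : (G1 ++ G2).drop m = G2 := List.drop_left' hG1len
  have K1 : stdW G1 = u := by
    rw [hG1', itlP_std hs1c hl1c (hs1.trans cm1t.symm) (hl1.trans cm1f.symm)]
    rw [hl1', stdW_shift, hε1, hδ1, hs1]
    rw [unshift (pw_filter_gt hu hj), hmk1']
    have := itlP_recon u (fun a => decide (a ≤ j))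
    rw [← filter_not_le] at this
    exact this
  have K2 : stdW G2 = v := by
    rw [hG2', itlP_std hs2c hl2c (hs2.trans cm2t.symm) (hl2.trans cm2f.symm)]
    rw [hl2', stdW_shift, hε2, hδ2, hs2]
    rw [unshift (pw_filter_gt hv hk), hmk2']
    have := itlP_recon v (fun a => decide (a ≤ k))
    rw [← filter_not_le] at this
    exact this
  have p6 : l1 ++ l2 = ε.map (· + i) := by
    rw [hl1', hl2', ← List.map_append, List.take_append_drop]
  have γperm : G1 ++ G2 ~ List.range' 1 (m+n) := by
    have p3 : G1 ++ G2 ~ (s1 ++ l1) ++ (s2 ++ l2) := p1.append p2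
    have p4 : (s1 ++ l1) ++ (s2 ++ l2) ~ (s1 ++ s2) ++ (l1 ++ l2) := append_swap _ _ _ _
    have p5 : s1 ++ s2 = δ := by rw [hs1', hs2', List.take_append_drop]
    have p7 : δ ~ List.range' 1 i := mem_permWords.1 hδp
    have p8 : ε.map (· + i) ~ List.range' (i+1) M := by
      rw [← map_shift_range']
      exact (mem_permWords.1 hεp).map _
    have p10 : List.range' 1 i ++ List.range' (i+1) M = List.range' 1 (m+n) := by
      have h := List.range'_append (s := 1) (m := i) (n := M) (step := 1)
      rw [show 1 + 1 * i = i + 1 by omega] at h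
      rw [h, show i + M = m + n by omega]
    calc G1 ++ G2 ~ (s1 ++ l1) ++ (s2 ++ l2) := p3
    _ ~ (s1 ++ s2) ++ (l1 ++ l2) := p4
    _ = δ ++ ε.map (· + i) := by rw [p5, p6]
    _ ~ List.range' 1 i ++ List.range' (i+1) M := p7.append p8
    _ = List.range' 1 (m+n) := p10
  have γmem : G1 ++ G2 ∈ permWords (m+n) := mem_permWords.2 γperm
  have hi0 : 0 < i := by
    cases b1
    · simp only [if_false, Bool.false_eq_true] at hpc1; omega
    · simp only [if_true] at hpc1; omega
  have hiN : i < m + n := by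
    cases b2
    · simp only [if_false, Bool.false_eq_true] at hpc2; omega
    · simp only [if_true] at hpc2; omega
  have gc1 : 1 ∈ (if b1 then (G1 ++ G2).take m else (G1 ++ G2).drop m) := by
    rw [htake, hdrop]
    cases b1
    · simp only [if_false, Bool.false_eq_true] at hδc ⊢
      exact p2.mem_iff.2 (List.mem_append.2 (Or.inl hδc))
    · simp only [if_true] at hδc ⊢
      exact p1.mem_iff.2 (List.mem_append.2 (Or.inl hδc))
  have gc2 : (m + n) ∈ (if b2 then (G1 ++ G2).drop m else (G1 ++ G2).take m) := by
    rw [htake, hdrop]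
    cases b2
    · simp only [if_false, Bool.false_eq_true] at hεc ⊢
      refine p1.mem_iff.2 (List.mem_append.2 (Or.inr ?_))
      rw [hl1']
      exact List.mem_map.2 ⟨M, hεc, by omega⟩
    · simp only [if_true] at hεc ⊢
      refine p2.mem_iff.2 (List.mem_append.2 (Or.inr ?_))
      rw [hl2']
      exact List.mem_map.2 ⟨M, hεc, by omega⟩
  constructor
  · rw [Finset.mem_product]
    constructor
    · simp only [genSet, Finset.mem_filter, hlu, hlv]
      exact ⟨γmem, ⟨by rw [htake, K1], by rw [hdrop, K2]⟩, gc1, gc2⟩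
    · rw [Finset.mem_Ioo]
      exact ⟨hi0, hiN⟩
  · have f0 : G1.filter (· ≤ i) = s1 := by
      rw [hG1']
      exact itlP_filter_pos _ (fun a ha => by simpa using hs1c a ha)
        (fun a ha => by simp; have := hl1c a ha; omega)
        (hs1.trans cm1t.symm) (hl1.trans cm1f.symm)
    have f0' : G2.filter (· ≤ i) = s2 := by
      rw [hG2']
      exact itlP_filter_pos _ (fun a ha => by simpa using hs2c a ha)
        (fun a ha => by simp; have := hl2c a ha; omega)
        (hs2.trans cm2t.symm) (hl2.trans cm2f.symm)
    have f1 : rk ((G1 ++ G2).take m) i = j := by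
      rw [htake, rk_def, f0, hs1]
    have f2 : (G1 ++ G2).filter (· ≤ i) = δ := by
      rw [List.filter_append, f0, f0', hs1', hs2', List.take_append_drop]
    have f3 : (G1 ++ G2).filter (fun a => i < a) = ε.map (· + i) := by
      rw [filter_not_le, List.filter_append, hG1', hG2']
      rw [itlP_filter_neg _ (fun a ha => by simpa using hs1c a ha)
        (fun a ha => by simp; have := hl1c a ha; omega)
        (hs1.trans cm1t.symm) (hl1.trans cm1f.symm)]
      rw [itlP_filter_neg _ (fun a ha => by simpa using hs2c a ha)
        (fun a ha => by simp; have := hl2c a ha; omega)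
        (hs2.trans cm2t.symm) (hl2.trans cm2f.symm)]
      exact p6
    have f4 : stdW (ε.map (· + i)) = ε := by
      rw [stdW_shift, stdW_pw hεp]
    show (⟨(rk ((G1 ++ G2).take m) i, i - rk ((G1 ++ G2).take m) i),
      ((G1 ++ G2).filter (· ≤ i), stdW ((G1 ++ G2).filter (fun a => i < a)))⟩ :
        (_ : ℕ × ℕ) × (List ℕ × List ℕ)) = ⟨(j,k),(δ,ε)⟩
    rw [f1, f2, f3, f4, show i - j = k by omega]
end Aux
namespace Aux
open List

lemma bwd_fwd {m n : ℕ} (b1 b2 : Bool) {u v : List ℕ}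
    (hu : u ∈ permWords m) (hv : v ∈ permWords n) {γ : List ℕ} {i : ℕ}
    (hγ : γ ∈ genSet b1 b2 u v) (hi : i ∈ Finset.Ioo 0 (m+n)) :
    bwd m u v (fwd m (γ, i)) = (γ, i) := by
  have hlu : u.length = m := pw_length hu
  have hlv : v.length = n := pw_length hv
  rw [Finset.mem_Ioo] at hi
  obtain ⟨hi0, hiN⟩ := hi
  rw [genSet, Finset.mem_filter, hlu, hlv] at hγ
  obtain ⟨hγp, ⟨hstd1, hstd2⟩, hcond1, hcond2⟩ := hγ
  obtain ⟨e1, e7, e6, e8, e2, e3, e4, e5, lenA2, lenB2⟩ := split_facts hγp (le_of_lt hiN)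
  have hγlen := pw_length hγp
  set A := γ.take m with hA'
  set B := γ.drop m with hB'
  set j := rk A i with hj'
  set k := i - j with hk'
  set δ := γ.filter (· ≤ i) with hδ'
  set C := γ.filter (fun a => i < a) with hC'
  set ε := stdW C with hε'
  have hC : C ~ List.range' (i+1) (m+n-i) := pw_filter_gt hγp (by omega)
  have hsubA : ∀ a ∈ A.filter (fun a => i < a), a ∈ C := by
    intro a ha
    rw [List.mem_filter] at ha ⊢
    exact ⟨List.take_subset m γ ha.1, ha.2⟩
  have hsubB : ∀ a ∈ B.filter (fun a => i < a), a ∈ C := by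
    intro a ha
    rw [List.mem_filter] at ha ⊢
    exact ⟨List.drop_subset m γ ha.1, ha.2⟩
  have hjk : j + k = i := by omega
  have hstep : bwd m u v (fwd m (γ, i)) =
      (itlP (u.map (fun a => decide (a ≤ j))) (δ.take j) ((ε.take (m-j)).map (· + (j+k))) ++
       itlP (v.map (fun a => decide (a ≤ k))) (δ.drop j) ((ε.drop (m-j)).map (· + (j+k))),
       j + k) := rfl
  rw [hstep, hjk]
  have hmask1 : u.map (fun a => decide (a ≤ j)) = A.map (fun a => decide (a ≤ i)) := by
    rw [← hstd1, hj']
    exact mask_le_map A i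
  have hmask2 : v.map (fun a => decide (a ≤ k)) = B.map (fun a => decide (a ≤ i)) := by
    rw [← hstd2, ← e1]
    exact mask_le_map B i
  have hlA : (ε.take (m-j)).map (· + i) = A.filter (fun a => i < a) := by
    rw [e4, List.map_map]
    refine (List.map_congr_left ?_).trans (List.map_id _)
    intro a ha
    have h1 := rk_of_perm_range' hC (hsubA a ha)
    have h2 : i < a := by simpa using (List.mem_filter.1 ha).2
    simp only [Function.comp_apply, id_eq]
    omega
  have hlB : (ε.drop (m-j)).map (· + i) = B.filter (fun a => i < a) := by
    rw [e5, List.map_map]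
    refine (List.map_congr_left ?_).trans (List.map_id _)
    intro a ha
    have h1 := rk_of_perm_range' hC (hsubB a ha)
    have h2 : i < a := by simpa using (List.mem_filter.1 ha).2
    simp only [Function.comp_apply, id_eq]
    omega
  have hG1 : itlP (u.map (fun a => decide (a ≤ j))) (δ.take j) ((ε.take (m-j)).map (· + i)) = A := by
    rw [hmask1, e2, hlA, filter_not_le]
    exact itlP_recon A _
  have hG2 : itlP (v.map (fun a => decide (a ≤ k))) (δ.drop j) ((ε.drop (m-j)).map (· + i)) = B := by
    rw [hmask2, e3, hlB, filter_not_le]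
    exact itlP_recon B _
  rw [hG1, hG2, hA', hB', List.take_append_drop]

lemma key {m n : ℕ} (b1 b2 : Bool) (hm : 1 ≤ m) (hn : 1 ≤ n)
    {u v : List ℕ} (hu : u ∈ permWords m) (hv : v ∈ permWords n) :
    ∑ γ ∈ genSet b1 b2 u v, copW (R := ℚ) γ =
      ∑ p ∈ Pset m n b1 b2,
        ∑ δ ∈ oneSet b1 (u.filter (· ≤ p.1)) (v.filter (· ≤ p.2)),
          ∑ ε ∈ maxSet b2 (stdW (u.filter (fun a => p.1 < a))) (stdW (v.filter (fun a => p.2 < a))),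
            Finsupp.single (δ, ε) (1:ℚ) := by
  have hlu : u.length = m := pw_length hu
  have hlv : v.length = n := pw_length hv
  have h1 : ∑ γ ∈ genSet b1 b2 u v, copW (R := ℚ) γ =
      ∑ x ∈ (genSet b1 b2 u v) ×ˢ Finset.Ioo 0 (m+n),
        Finsupp.single (x.1.filter (· ≤ x.2), stdW (x.1.filter (fun a => x.2 < a))) (1:ℚ) := by
    rw [Finset.sum_product]
    refine Finset.sum_congr rfl fun γ hγ => ?_
    have hγl : γ.length = m + n := by
      rw [genSet, Finset.mem_filter, hlu, hlv] at hγ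
      exact pw_length hγ.1
    rw [copW, hγl]
  have h2 : ∑ x ∈ (Pset m n b1 b2).sigma (fun p =>
        (oneSet b1 (u.filter (· ≤ p.1)) (v.filter (· ≤ p.2))) ×ˢ
        (maxSet b2 (stdW (u.filter (fun a => p.1 < a))) (stdW (v.filter (fun a => p.2 < a))))),
      Finsupp.single x.snd (1:ℚ) =
      ∑ p ∈ Pset m n b1 b2,
        ∑ δ ∈ oneSet b1 (u.filter (· ≤ p.1)) (v.filter (· ≤ p.2)),
          ∑ ε ∈ maxSet b2 (stdW (u.filter (fun a => p.1 < a))) (stdW (v.filter (fun a => p.2 < a))),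
            Finsupp.single (δ, ε) (1:ℚ) := by
    rw [Finset.sum_sigma]
    refine Finset.sum_congr rfl fun p hp => ?_
    rw [Finset.sum_product]
  rw [h1, ← h2]
  refine Finset.sum_nbij' (fwd m) (bwd m u v) ?_ ?_ ?_ ?_ ?_
  · rintro ⟨γ, i⟩ ha
    rw [Finset.mem_product] at ha
    exact fwd_mem b1 b2 hu hv ha.1 hlu hlv ha.2
  · rintro ⟨⟨j, k⟩, δ, ε⟩ hb
    rw [Finset.mem_sigma, Finset.mem_product] at hb
    exact (bwd_props b1 b2 hm hn hu hv hb.1 hb.2.1 hb.2.2).1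
  · rintro ⟨γ, i⟩ ha
    rw [Finset.mem_product] at ha
    exact bwd_fwd b1 b2 hu hv ha.1 ha.2
  · rintro ⟨⟨j, k⟩, δ, ε⟩ hb
    rw [Finset.mem_sigma, Finset.mem_product] at hb
    exact (bwd_props b1 b2 hm hn hu hv hb.1 hb.2.1 hb.2.2).2
  · rintro ⟨γ, i⟩ ha
    rfl

end Aux
namespace Aux
open List

noncomputable def coprodL : FW ℚ →ₗ[ℚ] FW2 ℚ :=
  Finsupp.lsum ℚ fun w => LinearMap.toSpanSingleton ℚ (FW2 ℚ) (copW w)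

lemma coprodW_eq (x : FW ℚ) : coprodW x = coprodL x := by
  rw [coprodW, coprodL, Finsupp.lsum_apply]
  refine Finsupp.sum_congr fun w _ => ?_
  rw [LinearMap.toSpanSingleton_apply]

lemma coprodL_single1 (γ : List ℕ) : coprodL (Finsupp.single γ (1:ℚ)) = copW γ := by
  rw [coprodL, Finsupp.lsum_single, LinearMap.toSpanSingleton_apply, one_smul]

noncomputable def sliceL (r : ℕ) : FW2 ℚ →ₗ[ℚ] FW2 ℚ :=
  Finsupp.lsum ℚ fun pq => LinearMap.toSpanSingleton ℚ (FW2 ℚ)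
    (if pq.1.length = r then Finsupp.single pq 1 else 0)

lemma sliceL_single (r : ℕ) (pq : List ℕ × List ℕ) (c : ℚ) :
    sliceL r (Finsupp.single pq c) =
      if pq.1.length = r then Finsupp.single pq c else 0 := by
  rw [sliceL, Finsupp.lsum_single, LinearMap.toSpanSingleton_apply]
  by_cases h : pq.1.length = r
  · rw [if_pos h, if_pos h, Finsupp.smul_single, smul_eq_mul, mul_one]
  · rw [if_neg h, if_neg h, smul_zero]

lemma slice_copW {m r : ℕ} (hr0 : 0 < r) (hrm : r < m) {w : List ℕ}
    (hw : w ∈ permWords m) :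
    sliceL r (copW (R := ℚ) w) =
      Finsupp.single (w.filter (· ≤ r), stdW (w.filter (fun a => r < a))) 1 := by
  rw [copW, pw_length hw, map_sum]
  have hstep : ∀ i ∈ Finset.Ioo 0 m,
      sliceL r (Finsupp.single (w.filter (· ≤ i), stdW (w.filter (fun a => i < a))) (1:ℚ)) =
      if i = r then Finsupp.single (w.filter (· ≤ i), stdW (w.filter (fun a => i < a))) (1:ℚ)
      else 0 := by
    intro i hi
    rw [Finset.mem_Ioo] at hi
    rw [sliceL_single]
    rw [pw_length_filter_le hw (by omega)]
  rw [Finset.sum_congr rfl hstep, Finset.sum_ite_eq' (Finset.Ioo 0 m) r]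
  rw [if_pos (by rw [Finset.mem_Ioo]; omega)]

lemma coprodW_support_sum (x : FW ℚ) :
    coprodW x = ∑ w ∈ x.support, (x w) • copW (R := ℚ) w := rfl

lemma contract {T : List ℕ × List ℕ → FW2 ℚ} {s : Finset (List ℕ)} {c : List ℕ → ℚ}
    {pr : List ℕ → List ℕ × List ℕ}
    (h : ∑ w ∈ s, Finsupp.single (pr w) (c w) = 0) :
    ∑ w ∈ s, (c w) • T (pr w) = 0 := by
  have h2 := congrArg (⇑(Finsupp.lsum ℚ fun pq => LinearMap.toSpanSingleton ℚ (FW2 ℚ) (T pq))) h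
  rw [map_sum, map_zero] at h2
  calc ∑ w ∈ s, (c w) • T (pr w)
      = ∑ w ∈ s, (Finsupp.lsum ℚ fun pq => LinearMap.toSpanSingleton ℚ (FW2 ℚ) (T pq))
          (Finsupp.single (pr w) (c w)) := by
        refine Finset.sum_congr rfl fun w _ => ?_
        rw [Finsupp.lsum_single, LinearMap.toSpanSingleton_apply]
    _ = 0 := h2

lemma inner_vanish {m : ℕ} {x : FW ℚ}
    (hsupp : ∀ w ∈ x.support, w ∈ permWords m)
    (hprim : coprodW x = 0) {r : ℕ} (hr0 : 0 < r) (hrm : r < m)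
    (T : List ℕ × List ℕ → FW2 ℚ) :
    ∑ w ∈ x.support, (x w) • T (w.filter (· ≤ r), stdW (w.filter (fun a => r < a))) = 0 := by
  refine contract ?_
  have h1 : sliceL r (coprodW x) =
      ∑ w ∈ x.support, Finsupp.single
        ((w.filter (· ≤ r), stdW (w.filter (fun a => r < a)))) (x w) := by
    rw [coprodW_support_sum, map_sum]
    refine Finset.sum_congr rfl fun w hw => ?_
    rw [map_smul, slice_copW hr0 hrm (hsupp w hw), Finsupp.smul_single, smul_eq_mul, mul_one]
  rw [← h1, hprim, map_zero]

lemma pw_filter_le_self {m : ℕ} {u : List ℕ} (hu : u ∈ permWords m) :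
    u.filter (· ≤ m) = u :=
  List.filter_eq_self.2 fun a ha => by
    have := (pw_mem_bounds hu ha).2; simpa

lemma pw_filter_le_zero {n : ℕ} {v : List ℕ} (hv : v ∈ permWords n) :
    v.filter (· ≤ 0) = [] :=
  List.filter_eq_nil_iff.2 fun a ha => by
    have := (pw_mem_bounds hv ha).1; simp; omega

lemma pw_filter_gt_self {m : ℕ} {u : List ℕ} (hu : u ∈ permWords m) :
    u.filter (fun a => m < a) = [] :=
  List.filter_eq_nil_iff.2 fun a ha => by
    have := (pw_mem_bounds hu ha).2; simp; omega

lemma pw_filter_gt_zero {n : ℕ} {v : List ℕ} (hv : v ∈ permWords n) :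
    v.filter (fun a => 0 < a) = v :=
  List.filter_eq_self.2 fun a ha => by
    have := (pw_mem_bounds hv ha).1; simp; omega

lemma stdW_nil : stdW [] = [] := rfl

lemma smul_factor {s : Finset (List ℕ)} {c : List ℕ → ℚ} {F : List ℕ → FW2 ℚ} (d : ℚ)
    (h : ∑ w ∈ s, c w • F w = 0) :
    ∑ w ∈ s, (c w * d) • F w = 0 := by
  have h2 : ∑ w ∈ s, (c w * d) • F w = d • ∑ w ∈ s, c w • F w := by
    rw [Finset.smul_sum]
    exact Finset.sum_congr rfl fun w _ => by rw [smul_smul, mul_comm d]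
  rw [h2, h, smul_zero]

lemma smul_factor' {s : Finset (List ℕ)} {c : List ℕ → ℚ} {F : List ℕ → FW2 ℚ} (d : ℚ)
    (h : ∑ w ∈ s, c w • F w = 0) :
    ∑ w ∈ s, (d * c w) • F w = 0 := by
  have h2 : ∑ w ∈ s, (d * c w) • F w = d • ∑ w ∈ s, c w • F w := by
    rw [Finset.smul_sum]
    exact Finset.sum_congr rfl fun w _ => by rw [smul_smul]
  rw [h2, h, smul_zero]

end Aux
namespace Aux
open List

lemma main_ne {m n : ℕ} (hm : 1 ≤ m) (hn : 1 ≤ n) (x y : FW ℚ)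
    (hx : ∀ w ∈ x.support, w ∈ permWords m) (hy : ∀ w ∈ y.support, w ∈ permWords n)
    (hpx : coprodW x = 0) (hpy : coprodW y = 0) :
    coprodW (neExt x y) = ∑ u ∈ x.support, ∑ v ∈ y.support, (x u * y v) •
      Finsupp.single (u, v) (1:ℚ) := by
  have e0 : neExt x y = ∑ u ∈ x.support, ∑ v ∈ y.support, (x u * y v) • neW u v := rfl
  have hKey : ∀ u ∈ x.support, ∀ v ∈ y.support,
      coprodL (neW u v) = ∑ p ∈ Pset m n true true,
        ∑ δ ∈ oneSet true (u.filter (· ≤ p.1)) (v.filter (· ≤ p.2)),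
          ∑ ε ∈ maxSet true (stdW (u.filter (fun a => p.1 < a)))
              (stdW (v.filter (fun a => p.2 < a))),
            Finsupp.single (δ, ε) (1:ℚ) := by
    intro u hu v hv
    rw [neW_eq, map_sum]
    simp only [coprodL_single1]
    exact key true true hm hn (hx u hu) (hy v hv)
  calc coprodW (neExt x y)
      = ∑ u ∈ x.support, ∑ v ∈ y.support, (x u * y v) •
          (∑ p ∈ Pset m n true true,
            ∑ δ ∈ oneSet true (u.filter (· ≤ p.1)) (v.filter (· ≤ p.2)),
              ∑ ε ∈ maxSet true (stdW (u.filter (fun a => p.1 < a)))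
                  (stdW (v.filter (fun a => p.2 < a))),
                Finsupp.single (δ, ε) (1:ℚ)) := by
        rw [e0, coprodW_eq, map_sum]
        refine Finset.sum_congr rfl fun u hu => ?_
        rw [map_sum]
        refine Finset.sum_congr rfl fun v hv => ?_
        rw [map_smul, hKey u hu v hv]
    _ = ∑ p ∈ Pset m n true true, ∑ u ∈ x.support, ∑ v ∈ y.support, (x u * y v) •
          (∑ δ ∈ oneSet true (u.filter (· ≤ p.1)) (v.filter (· ≤ p.2)),
              ∑ ε ∈ maxSet true (stdW (u.filter (fun a => p.1 < a)))
                  (stdW (v.filter (fun a => p.2 < a))),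
                Finsupp.single (δ, ε) (1:ℚ)) := by
        simp only [Finset.smul_sum]
        refine (Finset.sum_congr rfl fun u _ => Finset.sum_comm).trans ?_
        exact Finset.sum_comm
    _ = ∑ u ∈ x.support, ∑ v ∈ y.support, (x u * y v) • Finsupp.single (u, v) (1:ℚ) := by
        rw [Finset.sum_eq_single_of_mem ((m, 0) : ℕ × ℕ)]
        · refine Finset.sum_congr rfl fun u hu => Finset.sum_congr rfl fun v hv => ?_
          have hu' := hx u hu
          have hv' := hy v hv
          congr 1
          dsimp only
          rw [pw_filter_le_self hu', pw_filter_le_zero hv', pw_filter_gt_self hu',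
            pw_filter_gt_zero hv', stdW_pw hv']
          rw [show stdW [] = [] from rfl]
          rw [oneSet_right_nil hm hu', maxSet_left_nil hn hv',
            Finset.sum_singleton, Finset.sum_singleton]
        · simp only [Pset, Finset.mem_filter, Finset.mem_product, Finset.mem_range, if_true]
          omega
        · intro p hp hne
          simp only [Pset, Finset.mem_filter, Finset.mem_product, Finset.mem_range,
            if_true] at hp
          obtain ⟨⟨h1, h2⟩, h3, h4⟩ := hp
          rcases Nat.lt_or_ge p.1 m with hlt | hge
          · rw [Finset.sum_comm]
            refine Finset.sum_eq_zero fun v hv => ?_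
            have hz : ∑ u ∈ x.support, x u •
                (∑ δ ∈ oneSet true (u.filter (· ≤ p.1)) (v.filter (· ≤ p.2)),
                  ∑ ε ∈ maxSet true (stdW (u.filter (fun a => p.1 < a)))
                      (stdW (v.filter (fun a => p.2 < a))),
                    Finsupp.single (δ, ε) (1:ℚ)) = 0 :=
              inner_vanish hx hpx h3 hlt (fun pq =>
                ∑ δ ∈ oneSet true pq.1 (v.filter (· ≤ p.2)),
                  ∑ ε ∈ maxSet true pq.2 (stdW (v.filter (fun a => p.2 < a))),
                    Finsupp.single (δ, ε) (1:ℚ))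
            exact smul_factor (y v) hz
          · have hp1 : p.1 = m := by omega
            have hp2 : 1 ≤ p.2 := by
              rcases Nat.eq_zero_or_pos p.2 with h0 | h0
              · exact absurd (Prod.ext hp1 h0) hne
              · omega
            refine Finset.sum_eq_zero fun u hu => ?_
            have hz : ∑ v ∈ y.support, y v •
                (∑ δ ∈ oneSet true (u.filter (· ≤ p.1)) (v.filter (· ≤ p.2)),
                  ∑ ε ∈ maxSet true (stdW (u.filter (fun a => p.1 < a)))
                      (stdW (v.filter (fun a => p.2 < a))),
                    Finsupp.single (δ, ε) (1:ℚ)) = 0 :=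
              inner_vanish hy hpy hp2 h4 (fun pq =>
                ∑ δ ∈ oneSet true (u.filter (· ≤ p.1)) pq.1,
                  ∑ ε ∈ maxSet true (stdW (u.filter (fun a => p.1 < a))) pq.2,
                    Finsupp.single (δ, ε) (1:ℚ))
            exact smul_factor' (x u) hz

lemma main_sw {m n : ℕ} (hm : 1 ≤ m) (hn : 1 ≤ n) (x y : FW ℚ)
    (hx : ∀ w ∈ x.support, w ∈ permWords m) (hy : ∀ w ∈ y.support, w ∈ permWords n)
    (hpx : coprodW x = 0) (hpy : coprodW y = 0) :
    coprodW (swExt y x) = ∑ v ∈ y.support, ∑ u ∈ x.support, (y v * x u) •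
      Finsupp.single (u, v) (1:ℚ) := by
  have e0 : swExt y x = ∑ v ∈ y.support, ∑ u ∈ x.support, (y v * x u) • swW v u := rfl
  have hKey : ∀ v ∈ y.support, ∀ u ∈ x.support,
      coprodL (swW v u) = ∑ p ∈ Pset n m false false,
        ∑ δ ∈ oneSet false (v.filter (· ≤ p.1)) (u.filter (· ≤ p.2)),
          ∑ ε ∈ maxSet false (stdW (v.filter (fun a => p.1 < a)))
              (stdW (u.filter (fun a => p.2 < a))),
            Finsupp.single (δ, ε) (1:ℚ) := by
    intro v hv u hu
    rw [swW_eq, map_sum]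
    simp only [coprodL_single1]
    exact key false false hn hm (hy v hv) (hx u hu)
  calc coprodW (swExt y x)
      = ∑ v ∈ y.support, ∑ u ∈ x.support, (y v * x u) •
          (∑ p ∈ Pset n m false false,
            ∑ δ ∈ oneSet false (v.filter (· ≤ p.1)) (u.filter (· ≤ p.2)),
              ∑ ε ∈ maxSet false (stdW (v.filter (fun a => p.1 < a)))
                  (stdW (u.filter (fun a => p.2 < a))),
                Finsupp.single (δ, ε) (1:ℚ)) := by
        rw [e0, coprodW_eq, map_sum]
        refine Finset.sum_congr rfl fun v hv => ?_
        rw [map_sum]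
        refine Finset.sum_congr rfl fun u hu => ?_
        rw [map_smul, hKey v hv u hu]
    _ = ∑ p ∈ Pset n m false false, ∑ v ∈ y.support, ∑ u ∈ x.support, (y v * x u) •
          (∑ δ ∈ oneSet false (v.filter (· ≤ p.1)) (u.filter (· ≤ p.2)),
              ∑ ε ∈ maxSet false (stdW (v.filter (fun a => p.1 < a)))
                  (stdW (u.filter (fun a => p.2 < a))),
                Finsupp.single (δ, ε) (1:ℚ)) := by
        simp only [Finset.smul_sum]
        refine (Finset.sum_congr rfl fun v _ => Finset.sum_comm).trans ?_
        exact Finset.sum_comm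
    _ = ∑ v ∈ y.support, ∑ u ∈ x.support, (y v * x u) • Finsupp.single (u, v) (1:ℚ) := by
        rw [Finset.sum_eq_single_of_mem ((0, m) : ℕ × ℕ)]
        · refine Finset.sum_congr rfl fun v hv => Finset.sum_congr rfl fun u hu => ?_
          have hu' := hx u hu
          have hv' := hy v hv
          congr 1
          dsimp only
          rw [pw_filter_le_zero hv', pw_filter_le_self hu', pw_filter_gt_zero hv',
            pw_filter_gt_self hu', stdW_pw hv']
          rw [show stdW [] = [] from rfl]
          rw [oneSet_left_nil hm hu', maxSet_right_nil hn hv',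
            Finset.sum_singleton, Finset.sum_singleton]
        · simp only [Pset, Finset.mem_filter, Finset.mem_product, Finset.mem_range,
            if_false, Bool.false_eq_true]
          omega
        · intro p hp hne
          simp only [Pset, Finset.mem_filter, Finset.mem_product, Finset.mem_range,
            if_false, Bool.false_eq_true] at hp
          obtain ⟨⟨h1, h2⟩, h3, h4⟩ := hp
          rcases Nat.lt_or_ge p.2 m with hlt | hge
          · refine Finset.sum_eq_zero fun v hv => ?_
            have hz : ∑ u ∈ x.support, x u •
                (∑ δ ∈ oneSet false (v.filter (· ≤ p.1)) (u.filter (· ≤ p.2)),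
                  ∑ ε ∈ maxSet false (stdW (v.filter (fun a => p.1 < a)))
                      (stdW (u.filter (fun a => p.2 < a))),
                    Finsupp.single (δ, ε) (1:ℚ)) = 0 :=
              inner_vanish hx hpx h3 hlt (fun pq =>
                ∑ δ ∈ oneSet false (v.filter (· ≤ p.1)) pq.1,
                  ∑ ε ∈ maxSet false (stdW (v.filter (fun a => p.1 < a))) pq.2,
                    Finsupp.single (δ, ε) (1:ℚ))
            exact smul_factor' (y v) hz
          · have hp2 : p.2 = m := by omega
            have hp1 : 1 ≤ p.1 := by
              rcases Nat.eq_zero_or_pos p.1 with h0 | h0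
              · exact absurd (Prod.ext h0 hp2) hne
              · omega
            rw [Finset.sum_comm]
            refine Finset.sum_eq_zero fun u hu => ?_
            have hz : ∑ v ∈ y.support, y v •
                (∑ δ ∈ oneSet false (v.filter (· ≤ p.1)) (u.filter (· ≤ p.2)),
                  ∑ ε ∈ maxSet false (stdW (v.filter (fun a => p.1 < a)))
                      (stdW (u.filter (fun a => p.2 < a))),
                    Finsupp.single (δ, ε) (1:ℚ)) = 0 :=
              inner_vanish hy hpy hp1 h4 (fun pq =>
                ∑ δ ∈ oneSet false pq.1 (u.filter (· ≤ p.2)),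
                  ∑ ε ∈ maxSet false pq.2 (stdW (u.filter (fun a => p.2 < a))),
                    Finsupp.single (δ, ε) (1:ℚ))
            exact smul_factor (x u) hz

end Aux
theorem stmt9 : ∀ m n : ℕ, 1 ≤ m → 1 ≤ n → ∀ x y : FW ℚ,
    ↑x.support ⊆ (permWords m : Set (List ℕ)) →
    ↑y.support ⊆ (permWords n : Set (List ℕ)) →
    coprodW x = 0 → coprodW y = 0 →
    coprodW (neExt x y - swExt y x) = 0 := by
  intro m n hm hn x y hx hy hpx hpy
  have hx' : ∀ w ∈ x.support, w ∈ permWords m := fun w hw =>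
    Finset.mem_coe.1 (hx (Finset.mem_coe.2 hw))
  have hy' : ∀ w ∈ y.support, w ∈ permWords n := fun w hw =>
    Finset.mem_coe.1 (hy (Finset.mem_coe.2 hw))
  have hsub : coprodW (neExt x y - swExt y x) = coprodW (neExt x y) - coprodW (swExt y x) := by
    rw [Aux.coprodW_eq (neExt x y - swExt y x), map_sub,
      Aux.coprodW_eq (neExt x y), Aux.coprodW_eq (swExt y x)]
  rw [hsub, Aux.main_ne hm hn x y hx' hy' hpx hpy, Aux.main_sw hm hn x y hx' hy' hpx hpy]
  rw [sub_eq_zero, Finset.sum_comm]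
  exact Finset.sum_congr rfl fun v _ => Finset.sum_congr rfl fun u _ => by rw [mul_comm]
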